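/- arXiv:math/0506241 — 2 statements merged into one kernel-verified Lean document; each statement's English description precedes it below -/
import Mathlib

section
/- Let h : [0,1] → ℝ≥0 satisfy h(p) = 0 for all p ≥ p₀, where 0 < p₀ < 1. Suppose there exist q with 0 < q < p₀ and δ > 0 such that for all p ∈ [q, p₀), h(p) ≥ δ(p₀ - p)²/log(1/(p₀ - p)). Then h is not three times differentiable at p₀ (i.e., there is no third derivative of h at p₀ in the sense that h, h', h'' exist near p₀ with h'' differentiable at p₀). -/
/-- If `f` is differentiable at `a` and vanishes on `[a, ∞)`, then `deriv f a = 0`. -/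
lemma aux_deriv_eq_zero_of_right (f : ℝ → ℝ) (a : ℝ)
    (hf : DifferentiableAt ℝ f a) (h0 : ∀ x, a ≤ x → f x = 0) :
    deriv f a = 0 := by
  have hd : HasDerivWithinAt f (deriv f a) (Set.Ici a) a :=
    hf.hasDerivAt.hasDerivWithinAt
  have hz : HasDerivWithinAt f 0 (Set.Ici a) a := by
    have hc : HasDerivWithinAt (fun _ : ℝ => (0:ℝ)) 0 (Set.Ici a) a :=
      (hasDerivAt_const a (0:ℝ)).hasDerivWithinAt
    exact hc.congr (fun x hx => h0 x hx) (h0 a le_rfl)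
  have h1 := hd.derivWithin (uniqueDiffOn_Ici a a Set.self_mem_Ici)
  have h2 := hz.derivWithin (uniqueDiffOn_Ici a a Set.self_mem_Ici)
  rw [← h1, h2]

set_option maxHeartbeats 1000000

/-- If `h : [0,1] → ℝ≥0` vanishes on `[p₀, 1]` and satisfies the lower bound
`h p ≥ δ (p₀ - p)² / log (1/(p₀ - p))` on `[q, p₀)`, then `h` is not three times
differentiable at `p₀` (in the sense that `h` and `deriv h` are differentiable on a
neighborhood of `p₀` and `deriv (deriv h)` is differentiable at `p₀`). -/
theorem stmt_0 (h : ℝ → ℝ) (p₀ : ℝ) (hp₀ : p₀ ∈ Set.Ioo (0 : ℝ) 1)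
    (hnonneg : ∀ p ∈ Set.Icc (0 : ℝ) 1, 0 ≤ h p)
    (hzero : ∀ p, p₀ ≤ p → h p = 0)
    (q δ : ℝ) (hq : 0 < q) (hqp₀ : q < p₀) (hδ : 0 < δ)
    (hlower : ∀ p ∈ Set.Ico q p₀,
      δ * (p₀ - p) ^ 2 / Real.log (1 / (p₀ - p)) ≤ h p) :
    ¬ ∃ ε > 0, (∀ x ∈ Metric.ball p₀ ε,
        DifferentiableAt ℝ h x ∧ DifferentiableAt ℝ (deriv h) x) ∧
      DifferentiableAt ℝ (deriv (deriv h)) p₀ := by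
  rintro ⟨ε, hε, hdiff, h3⟩
  have hp₀ball : p₀ ∈ Metric.ball p₀ ε := Metric.mem_ball_self hε
  -- derivative of a function vanishing on [p₀,∞) vanishes on (p₀,∞)
  have hEv : ∀ (f : ℝ → ℝ), (∀ x, p₀ ≤ x → f x = 0) → ∀ x, p₀ < x → deriv f x = 0 := by
    intro f hf x hx
    have he : f =ᶠ[nhds x] fun _ => (0:ℝ) :=
      Filter.eventuallyEq_of_mem (Ioi_mem_nhds hx) (fun y hy => hf y (le_of_lt hy))
    rw [he.deriv_eq, deriv_const]
  have hg1zero : ∀ x, p₀ ≤ x → deriv h x = 0 := by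
    intro x hx
    rcases eq_or_lt_of_le hx with rfl | hx'
    · exact aux_deriv_eq_zero_of_right h p₀ (hdiff p₀ hp₀ball).1 hzero
    · exact hEv h hzero x hx'
  have hg2zero : ∀ x, p₀ ≤ x → deriv (deriv h) x = 0 := by
    intro x hx
    rcases eq_or_lt_of_le hx with rfl | hx'
    · exact aux_deriv_eq_zero_of_right (deriv h) p₀ (hdiff p₀ hp₀ball).2 hg1zero
    · exact hEv (deriv h) hg1zero x hx'
  have hg3zero : deriv (deriv (deriv h)) p₀ = 0 :=
    aux_deriv_eq_zero_of_right (deriv (deriv h)) p₀ h3 hg2zero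
  -- little-o bound on deriv (deriv h) near p₀
  have hDA : HasDerivAt (deriv (deriv h)) 0 p₀ := hg3zero ▸ h3.hasDerivAt
  have hlo : (fun x => deriv (deriv h) x) =o[nhds p₀] fun x => x - p₀ := by
    have := hasDerivAt_iff_isLittleO.mp hDA
    simpa [hg2zero p₀ le_rfl] using this
  have hev := hlo.def one_pos
  rw [Metric.eventually_nhds_iff] at hev
  obtain ⟨r, hr, hrbound⟩ := hev
  -- choose t
  set t : ℝ := min (min (ε/2) (p₀ - q)) (min (r/2) (min (1/2) (δ^2/8))) with ht_def
  have ht0 : 0 < t := by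
    apply lt_min (lt_min (by linarith) (by linarith))
    exact lt_min (by linarith) (lt_min (by norm_num) (by positivity))
  have htε : t < ε := lt_of_le_of_lt ((min_le_left _ _).trans (min_le_left _ _)) (by linarith)
  have htq : t ≤ p₀ - q := (min_le_left _ _).trans (min_le_right _ _)
  have htr : t < r := lt_of_le_of_lt ((min_le_right _ _).trans (min_le_left _ _)) (by linarith)
  have ht1 : t < 1 := lt_of_le_of_lt ((min_le_right _ _).trans ((min_le_right _ _).trans (min_le_left _ _))) (by norm_num)
  have htδ : t ≤ δ^2/8 := (min_le_right _ _).trans ((min_le_right _ _).trans (min_le_right _ _))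
  set p : ℝ := p₀ - t with hp_def
  have hpp₀ : p < p₀ := by simp [hp_def]; exact ht0
  have hsub : Set.Icc p p₀ ⊆ Metric.ball p₀ ε := by
    intro x hx
    rw [Metric.mem_ball, Real.dist_eq, abs_sub_lt_iff]
    constructor <;> [linarith [hx.2]; linarith [hx.1, hpp₀]]
  -- first MVT
  have hcont : ContinuousOn h (Set.Icc p p₀) :=
    fun x hx => ((hdiff x (hsub hx)).1).continuousAt.continuousWithinAt
  have hderiv : ∀ x ∈ Set.Ioo p p₀, HasDerivAt h (deriv h x) x :=
    fun x hx => ((hdiff x (hsub ⟨hx.1.le, hx.2.le⟩)).1).hasDerivAt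
  obtain ⟨ξ, hξmem, hξeq⟩ := exists_hasDerivAt_eq_slope h (deriv h) hpp₀ hcont hderiv
  -- second MVT on [ξ, p₀]
  have hξsub : Set.Icc ξ p₀ ⊆ Set.Icc p p₀ :=
    Set.Icc_subset_Icc hξmem.1.le le_rfl
  have hcont2 : ContinuousOn (deriv h) (Set.Icc ξ p₀) :=
    fun x hx => ((hdiff x (hsub (hξsub hx))).2).continuousAt.continuousWithinAt
  have hderiv2 : ∀ x ∈ Set.Ioo ξ p₀, HasDerivAt (deriv h) (deriv (deriv h) x) x :=
    fun x hx => ((hdiff x (hsub (hξsub ⟨hx.1.le, hx.2.le⟩))).2).hasDerivAt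
  obtain ⟨η, hηmem, hηeq⟩ :=
    exists_hasDerivAt_eq_slope (deriv h) (deriv (deriv h)) hξmem.2 hcont2 hderiv2
  -- express h p
  have hhp₀ : h p₀ = 0 := hzero p₀ le_rfl
  have hg1p₀ : deriv h p₀ = 0 := hg1zero p₀ le_rfl
  have hξpos : 0 < p₀ - ξ := by linarith [hξmem.2]
  have hξt : p₀ - ξ ≤ t := by have := hξmem.1; simp [hp_def] at this ⊢; linarith
  have hηt : p₀ - η ≤ t := by linarith [hηmem.1, hξmem.1, hpp₀]
  have hpt : p₀ - p = t := by simp [hp_def]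
  have hderivξ : deriv h ξ = -(h p) / t := by
    rw [hξeq, hhp₀, hpt]; ring
  have hderivη : deriv (deriv h) η = (h p / t) / (p₀ - ξ) := by
    rw [hηeq, hg1p₀, hderivξ]; ring
  -- bound on h p
  have hηr : dist η p₀ < r := by
    rw [Real.dist_eq, abs_sub_lt_iff]
    constructor <;> [linarith [hηmem.2]; linarith [hηmem.1, hξmem.1, hpp₀, htr]]
  have habs : |deriv (deriv h) η| ≤ |η - p₀| := by
    have := hrbound hηr
    simpa using this
  have hg2η : deriv (deriv h) η ≤ t := by
    have h1 : deriv (deriv h) η ≤ |η - p₀| := le_trans (le_abs_self _) habs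
    have h2 : |η - p₀| = p₀ - η := by rw [abs_sub_comm, abs_of_pos]; linarith [hηmem.2]
    linarith
  have hhp : h p = deriv (deriv h) η * (p₀ - ξ) * t := by
    rw [hderivη]; field_simp
  have hhp_le : h p ≤ t^3 := by
    nlinarith [mul_nonneg (mul_nonneg (sub_nonneg.mpr hg2η) hξpos.le) ht0.le,
      mul_nonneg (mul_nonneg (sub_nonneg.mpr hξt) ht0.le) ht0.le]
  -- lower bound
  have hplow : p ∈ Set.Ico q p₀ := ⟨by simp [hp_def]; linarith, hpp₀⟩
  have hlow := hlower p hplow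
  rw [hpt] at hlow
  have hlogpos : 0 < Real.log (1/t) := Real.log_pos (one_lt_one_div ht0 ht1)
  -- from the two bounds on h p
  have hkey : δ ≤ t * Real.log (1/t) := by
    have h1 : δ * t^2 ≤ t^3 * Real.log (1/t) := by
      have := (div_le_iff₀ hlogpos).mp (le_trans hlow hhp_le)
      linarith
    nlinarith [mul_pos ht0 ht0]
  -- estimate t * log(1/t) ≤ 2 √t < δ
  set s : ℝ := Real.sqrt t with hs_def
  have hspos : 0 < s := Real.sqrt_pos.mpr ht0
  have hs2 : s^2 = t := Real.sq_sqrt ht0.le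
  have hlog2 : Real.log (1/t) ≤ 2 / s := by
    have heq : (1:ℝ)/t = (1/s)^2 := by rw [← hs2]; ring
    rw [heq, Real.log_pow]
    have := Real.log_le_sub_one_of_pos (show (0:ℝ) < 1/s by positivity)
    push_cast
    have h1s : 0 < 1/s := by positivity
    have h2s : 2/s = 2*(1/s) := by ring
    linarith
  have hsδ : s < δ/2 := by nlinarith [hs2, hspos, htδ, mul_pos hδ hδ]
  have hfinal : t * Real.log (1/t) ≤ 2 * s := by
    have h1 : t * Real.log (1/t) ≤ t * (2/s) := by
      apply mul_le_mul_of_nonneg_left hlog2 ht0.le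
    have h2 : t * (2/s) = 2 * s := by rw [← hs2]; field_simp
    linarith
  linarith
end

section
/- Let τ₁, τ₂, … be i.i.d. random variables taking values in {1, 2, 3, …} with κ := E[τ₁] ≥ 1, and suppose P[τ₁ ≥ t] ≤ C₂·exp(-t/C₂) for all t ≥ 1 and some C₂ > 0. Define N_n := sup{m : τ₁ + ⋯ + τ_m ≤ n}. Then there exists C₃ > 0 depending only on C₂ such that for all ε ∈ (0,1) and all n ≥ 1, P[τ_{N_n+1} ≥ ε·n] ≤ C₃·n·exp(-ε·n/C₃). -/
open MeasureTheory ProbabilityTheory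

/-- renewal overshoot tail bound (Lemma 2.1, abstract version). The
variables `τ 0, τ 1, …` are i.i.d. positive-integer valued with exponential tails;
`N n ω = sup {m | τ 0 + ⋯ + τ (m-1) ≤ n}` is the renewal counting process, and
(0-indexed) `τ (N n ω)` is the interarrival time `τ_{N_n + 1}` of the paper. -/
theorem stmt_13 {Ω : Type*} [MeasurableSpace Ω] (μ : Measure Ω) [IsProbabilityMeasure μ]
    (τ : ℕ → Ω → ℕ) (hmeas : ∀ i, Measurable (τ i))
    (hpos : ∀ i ω, 1 ≤ τ i ω)
    (hindep : iIndepFun τ μ)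
    (hident : ∀ i, μ.map (τ i) = μ.map (τ 0))
    (κ : ℝ) (hκdef : κ = ∫ ω, (τ 0 ω : ℝ) ∂μ) (hκ : 1 ≤ κ)
    (C₂ : ℝ) (hC₂ : 0 < C₂)
    (htail : ∀ t : ℝ, 1 ≤ t →
      (μ {ω | t ≤ (τ 0 ω : ℝ)}).toReal ≤ C₂ * Real.exp (-t / C₂))
    (N : ℕ → Ω → ℕ)
    (hN : ∀ n ω, N n ω = sSup {m : ℕ | ∑ i ∈ Finset.range m, τ i ω ≤ n}) :
    ∃ C₃ > 0, ∀ ε ∈ Set.Ioo (0 : ℝ) 1, ∀ n : ℕ, 1 ≤ n →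
      (μ {ω | ε * n ≤ (τ (N n ω) ω : ℝ)}).toReal ≤
        C₃ * n * Real.exp (-ε * n / C₃) := by
  classical
  set C₃ : ℝ := max (2 * C₂) 2 with hC₃def
  have hC₃2 : (2:ℝ) ≤ C₃ := le_max_right _ _
  have hC₃C₂ : 2 * C₂ ≤ C₃ := le_max_left _ _
  have hC₃pos : (0:ℝ) < C₃ := lt_of_lt_of_le two_pos hC₃2
  have hC₂C₃ : C₂ ≤ C₃ := le_trans (by linarith) hC₃C₂
  refine ⟨C₃, hC₃pos, ?_⟩
  intro ε hε n hn
  have hε0 : 0 < ε := hε.1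
  have hε1 : ε < 1 := hε.2
  have hn0 : (0:ℝ) < n := by exact_mod_cast hn
  have hNle : ∀ ω, N n ω ≤ n := by
    intro ω
    rw [hN]
    apply csSup_le ⟨0, by simp⟩
    intro m hm
    have h1 : m ≤ ∑ i ∈ Finset.range m, τ i ω := by
      calc m = ∑ i ∈ Finset.range m, 1 := by simp
      _ ≤ _ := Finset.sum_le_sum fun i _ => hpos i ω
    exact le_trans h1 hm
  have hsub : {ω | ε * n ≤ (τ (N n ω) ω : ℝ)} ⊆
      ⋃ m ∈ Finset.range (n+1), {ω | ε * n ≤ (τ m ω : ℝ)} := by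
    intro ω hω
    exact Set.mem_biUnion (Finset.mem_range.2 (Nat.lt_succ_of_le (hNle ω))) hω
  have hset : ∀ m : ℕ, μ {ω | ε * n ≤ (τ m ω : ℝ)} = μ {ω | ε * n ≤ (τ 0 ω : ℝ)} := by
    intro m
    have hms : MeasurableSet {k : ℕ | ε * n ≤ (k:ℝ)} := trivial
    have e1 : {ω | ε * n ≤ (τ m ω : ℝ)} = τ m ⁻¹' {k : ℕ | ε * n ≤ (k:ℝ)} := rfl
    have e2 : {ω | ε * n ≤ (τ 0 ω : ℝ)} = τ 0 ⁻¹' {k : ℕ | ε * n ≤ (k:ℝ)} := rfl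
    rw [e1, e2, ← Measure.map_apply (hmeas m) hms, ← Measure.map_apply (hmeas 0) hms,
      hident m]
  have key : μ {ω | ε * n ≤ (τ (N n ω) ω : ℝ)} ≤ (n+1) * μ {ω | ε * n ≤ (τ 0 ω : ℝ)} := by
    calc μ {ω | ε * n ≤ (τ (N n ω) ω : ℝ)}
        ≤ μ (⋃ m ∈ Finset.range (n+1), {ω | ε * n ≤ (τ m ω : ℝ)}) := measure_mono hsub
      _ ≤ ∑ m ∈ Finset.range (n+1), μ {ω | ε * n ≤ (τ m ω : ℝ)} :=
          measure_biUnion_finset_le _ _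
      _ = (n+1) * μ {ω | ε * n ≤ (τ 0 ω : ℝ)} := by
          simp [hset, Finset.sum_const, mul_comm]
  have hfin : μ {ω | ε * n ≤ (τ 0 ω : ℝ)} ≠ ⊤ := measure_ne_top _ _
  have keyR : (μ {ω | ε * n ≤ (τ (N n ω) ω : ℝ)}).toReal ≤
      (n+1) * (μ {ω | ε * n ≤ (τ 0 ω : ℝ)}).toReal := by
    have := ENNReal.toReal_mono (by finiteness) key
    rw [ENNReal.toReal_mul, ENNReal.toReal_add (by simp) (by simp)] at this
    simpa using this
  by_cases h1 : 1 ≤ ε * n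
  · have htail' := htail (ε * n) h1
    have hexp : Real.exp (-(ε * n) / C₂) ≤ Real.exp (-ε * n / C₃) := by
      apply Real.exp_le_exp.2
      rw [neg_mul, neg_div, neg_div, neg_le_neg_iff]
      apply div_le_div_of_nonneg_left (by positivity) hC₂ hC₂C₃
    calc (μ {ω | ε * n ≤ (τ (N n ω) ω : ℝ)}).toReal
        ≤ (n+1) * (μ {ω | ε * n ≤ (τ 0 ω : ℝ)}).toReal := keyR
      _ ≤ (n+1) * (C₂ * Real.exp (-(ε * n) / C₂)) := by
          apply mul_le_mul_of_nonneg_left htail' (by positivity)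
      _ ≤ (n+1) * (C₂ * Real.exp (-ε * n / C₃)) := by
          apply mul_le_mul_of_nonneg_left
            (mul_le_mul_of_nonneg_left hexp hC₂.le) (by positivity)
      _ ≤ C₃ * n * Real.exp (-ε * n / C₃) := by
          have hexp0 : 0 < Real.exp (-ε * n / C₃) := Real.exp_pos _
          have : ((n:ℝ)+1) * C₂ ≤ C₃ * n := by nlinarith
          nlinarith
  · push_neg at h1
    have hle1 : (μ {ω | ε * n ≤ (τ (N n ω) ω : ℝ)}).toReal ≤ 1 := by
      have := prob_le_one (μ := μ) (s := {ω | ε * n ≤ (τ (N n ω) ω : ℝ)})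
      exact ENNReal.toReal_le_of_le_ofReal one_pos.le (by simpa using this)
    have hehalf : Real.exp (1/2) < 2 := by
      have h := Real.exp_one_lt_d9
      nlinarith [Real.exp_pos (1/2 : ℝ), Real.exp_add (1/2 : ℝ) (1/2 : ℝ),
        Real.exp_pos (1:ℝ)]
    have hexp : Real.exp (-(1:ℝ)/2) ≤ Real.exp (-ε * n / C₃) := by
      apply Real.exp_le_exp.2
      rw [neg_mul, neg_div, neg_div, neg_le_neg_iff]
      calc ε * n / C₃ ≤ 1 / C₃ := by
            apply div_le_div_of_nonneg_right h1.le hC₃pos.le |>.trans_eq rfl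
        _ ≤ 1 / 2 := by
            apply div_le_div_of_nonneg_left one_pos.le two_pos hC₃2
    have h2 : (1:ℝ) ≤ 2 * Real.exp (-(1:ℝ)/2) := by
      have := Real.exp_pos (-(1:ℝ)/2)
      have hmul : Real.exp (1/2) * Real.exp (-(1:ℝ)/2) = 1 := by
        rw [← Real.exp_add]; norm_num
      nlinarith
    calc (μ {ω | ε * n ≤ (τ (N n ω) ω : ℝ)}).toReal ≤ 1 := hle1
      _ ≤ 2 * Real.exp (-(1:ℝ)/2) := h2
      _ ≤ C₃ * n * Real.exp (-ε * n / C₃) := by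
          have hn1 : (1:ℝ) ≤ n := by exact_mod_cast hn
          have h3 : (2:ℝ) ≤ C₃ * n := by nlinarith
          have := Real.exp_pos (-(1:ℝ)/2)
          nlinarith [Real.exp_pos (-ε * n / C₃)]
end
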